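/- Let α ∈ (0,1] and let m ≥ 0 be an integer. Then the Rodrigues-type formula H_m^α(x) = (−α^{−1})^m e^{x^{2α}} T_α^{(m)}(e^{−x^{2α}})(x) holds for all x > 0, where T_α^{(m)} is the m-fold conformable fractional derivative of order α applied to the function x ↦ e^{−x^{2α}}. -/

import Mathlib

/-- The physicists' Hermite polynomials, as real functions:
`H₀ = 1`, `H₁ x = 2 x`, `H_{m+1} x = 2 x * H_m x - 2 m * H_{m-1} x`. -/
noncomputable def hermiteP : ℕ → ℝ → ℝ
  | 0, _ => 1
  | 1, x => 2 * x
  | (m + 2), x => 2 * x * hermiteP (m + 1) x - 2 * ((m : ℝ) + 1) * hermiteP m x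

lemma hermiteP_hasDerivAt : ∀ (m : ℕ) (x : ℝ),
    HasDerivAt (hermiteP m) (2 * m * hermiteP (m - 1) x) x := by
  intro m
  induction m using Nat.twoStepInduction with
  | zero => intro x; simpa [hermiteP] using (hasDerivAt_const x (1:ℝ))
  | one =>
      intro x
      have := (hasDerivAt_id x).const_mul (2:ℝ)
      simpa [hermiteP] using this
  | more k ih0 ih1 =>
      intro x
      have hx : HasDerivAt (fun y : ℝ => 2 * y * hermiteP (k+1) y -
          2 * ((k:ℝ)+1) * hermiteP k y)
          ((2 * hermiteP (k+1) x + 2 * x * (2 * (k+1) * hermiteP k x)) -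
            2 * ((k:ℝ)+1) * (2 * k * hermiteP (k-1) x)) x := by
        have h1 : HasDerivAt (fun y : ℝ => 2 * y * hermiteP (k+1) y)
            (2 * hermiteP (k+1) x + 2 * x * (2 * (k+1) * hermiteP k x)) x := by
          simpa using ((hasDerivAt_id x).const_mul (2:ℝ)).fun_mul (ih1 x)
        have h2 : HasDerivAt (fun y : ℝ => 2 * ((k:ℝ)+1) * hermiteP k y)
            (2 * ((k:ℝ)+1) * (2 * k * hermiteP (k-1) x)) x :=
          (ih0 x).const_mul _
        exact h1.sub h2
      have hfun : (fun y : ℝ => 2 * y * hermiteP (k+1) y -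
          2 * ((k:ℝ)+1) * hermiteP k y) = hermiteP (k+2) := by
        funext y; simp [hermiteP]
      rw [hfun] at hx
      have hval : (2 * hermiteP (k+1) x + 2 * x * (2 * (k+1) * hermiteP k x)) -
            2 * ((k:ℝ)+1) * (2 * k * hermiteP (k-1) x)
          = 2 * ((k:ℕ)+2) * hermiteP (k+1) x := by
        cases k with
        | zero => simp [hermiteP]; ring
        | succ j =>
            have hrec : hermiteP (j+2) x = 2 * x * hermiteP (j+1) x -
                2 * ((j:ℝ)+1) * hermiteP j x := by simp [hermiteP]
            push_cast
            rw [hrec]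
            ring
      rw [hval] at hx
      convert hx using 2
      push_cast
      ring
      rfl

/-- The derivatives of the Gaussian: `(-1)^m e^{-u²} H_m(u)`. -/
noncomputable def hermGauss (m : ℕ) (u : ℝ) : ℝ :=
  (-1:ℝ) ^ m * Real.exp (-u ^ 2) * hermiteP m u

lemma hermGauss_hasDerivAt (m : ℕ) (u : ℝ) :
    HasDerivAt (hermGauss m) (hermGauss (m+1) u) u := by
  have hexp : HasDerivAt (fun u : ℝ => Real.exp (-u ^ 2))
      (Real.exp (-u ^ 2) * -(2 * u)) u := by
    simpa using ((hasDerivAt_pow 2 u).neg).exp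
  have h := ((hexp.fun_mul (hermiteP_hasDerivAt m u)).const_mul ((-1:ℝ)^m))
  have hfun : (fun y : ℝ => (-1:ℝ)^m * (Real.exp (-y ^ 2) * hermiteP m y))
      = hermGauss m := by
    funext y; simp [hermGauss, mul_assoc]
  rw [hfun] at h
  have hval : (-1:ℝ)^m * (Real.exp (-u ^ 2) * -(2 * u) * hermiteP m u +
        Real.exp (-u ^ 2) * (2 * m * hermiteP (m-1) u))
      = hermGauss (m+1) u := by
    unfold hermGauss
    cases m with
    | zero => simp [hermiteP]
    | succ j =>
        have hrec : hermiteP (j+2) u = 2 * u * hermiteP (j+1) u -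
            2 * ((j:ℝ)+1) * hermiteP j u := by simp [hermiteP]
        rw [hrec]
        push_cast
        ring
  rw [hval] at h
  exact h

lemma iter_eq (α : ℝ) (_hα : 0 < α) (m : ℕ) : ∀ x : ℝ, 0 < x →
    ((fun f : ℝ → ℝ => fun x => x ^ (1 - α) * deriv f x)^[m]
        (fun x : ℝ => Real.exp (-(x ^ (2 * α))))) x
      = α ^ m * hermGauss m (x ^ α) := by
  induction m with
  | zero =>
      intro x hx
      have h2 : (x ^ α) ^ (2:ℕ) = x ^ (2 * α) := by
        rw [← Real.rpow_natCast (x ^ α) 2, ← Real.rpow_mul hx.le]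
        norm_num [mul_comm]
      simp [hermGauss, hermiteP, h2]
  | succ m ih =>
      intro x hx
      rw [Function.iterate_succ_apply']
      have hev : ((fun f : ℝ → ℝ => fun x => x ^ (1 - α) * deriv f x)^[m]
          (fun x : ℝ => Real.exp (-(x ^ (2 * α)))))
          =ᶠ[nhds x] (fun y => α ^ m * hermGauss m (y ^ α)) := by
        filter_upwards [Ioi_mem_nhds hx] with y hy using ih y hy
      have hd : HasDerivAt (fun y : ℝ => α ^ m * hermGauss m (y ^ α))
          (α ^ m * (hermGauss (m+1) (x ^ α) * (α * x ^ (α - 1)))) x := by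
        have hr : HasDerivAt (fun y : ℝ => y ^ α) (α * x ^ (α - 1)) x :=
          Real.hasDerivAt_rpow_const (Or.inl hx.ne')
        exact ((hermGauss_hasDerivAt m (x ^ α)).comp x hr).const_mul _
      have hderiv : deriv ((fun f : ℝ → ℝ => fun x => x ^ (1 - α) * deriv f x)^[m]
          (fun x : ℝ => Real.exp (-(x ^ (2 * α))))) x
          = α ^ m * (hermGauss (m+1) (x ^ α) * (α * x ^ (α - 1))) := by
        rw [hev.deriv_eq]; exact hd.deriv
      simp only [hderiv]
      have hxx : x ^ (1 - α) * x ^ (α - 1) = 1 := by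
        rw [← Real.rpow_add hx]; norm_num
      linear_combination (α ^ m * α * hermGauss (m+1) (x ^ α)) * hxx

theorem stmt_12 (α : ℝ) (hα : α ∈ Set.Ioc (0:ℝ) 1) (m : ℕ) :
    ∀ x : ℝ, 0 < x →
      hermiteP m (x ^ α)
        = (-α⁻¹) ^ m * Real.exp (x ^ (2 * α)) *
            ((fun f : ℝ → ℝ => fun x => x ^ (1 - α) * deriv f x)^[m]
                (fun x : ℝ => Real.exp (-(x ^ (2 * α))))) x := by
  intro x hx
  rw [iter_eq α hα.1 m x hx]
  unfold hermGauss
  have h2 : (x ^ α) ^ (2:ℕ) = x ^ (2 * α) := by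
    rw [← Real.rpow_natCast (x ^ α) 2, ← Real.rpow_mul hx.le]
    norm_num [mul_comm]
  rw [h2]
  have hE : Real.exp (x ^ (2 * α)) * Real.exp (-(x ^ (2 * α))) = 1 := by
    rw [← Real.exp_add]; simp
  have hA : (-α⁻¹) ^ m * α ^ m * (-1:ℝ) ^ m = 1 := by
    rw [← mul_pow, ← mul_pow]
    rw [show -α⁻¹ * α * -1 = α⁻¹ * α by ring, inv_mul_cancel₀ hα.1.ne', one_pow]
  linear_combination (-((-α⁻¹) ^ m * α ^ m * (-1:ℝ) ^ m *
      hermiteP m (x ^ α))) * hE + (-(hermiteP m (x ^ α))) * hA
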